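/- For every integer n ≥ 1 there exists a finite simple graph G such that the set of vertex degrees of G is exactly {0, 1, 2, …, 2^n − 1} (in particular Δ(G) = 2^n − 1) and reg(G) = n. -/

import Mathlib

open SimpleGraph

variable {V : Type*}

/-- The number of edges of the edge set `F` incident with the vertex `v`. -/
noncomputable def edgeDeg (F : Set (Sym2 V)) (v : V) : ℕ := {e ∈ F | v ∈ e}.ncard

/-- The subgraph induced by the edge set `F` (on the vertices incident with edges of `F`)
is `r`-regular: every vertex incident with an edge of `F` lies on exactly `r` edges of `F`. -/
def IsRegularEdgeSet (F : Set (Sym2 V)) (r : ℕ) : Prop :=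
  ∀ v : V, (∃ e ∈ F, v ∈ e) → edgeDeg F v = r

/-- `P` is a partition of the edge set of `G` into `t` nonempty parts, each of which
induces a regular subgraph. -/
def IsRegularPartition (G : SimpleGraph V) {t : ℕ} (P : Fin t → Set (Sym2 V)) : Prop :=
  (∀ i, (P i).Nonempty) ∧ (∀ i j, i ≠ j → Disjoint (P i) (P j)) ∧
    (⋃ i, P i) = G.edgeSet ∧ ∀ i, ∃ r, IsRegularEdgeSet (P i) r

/-- The regular number of `G`: the minimum number of parts in a partition of the edge set of `G`
into nonempty subsets each of which induces a regular subgraph. -/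
noncomputable def regNum (G : SimpleGraph V) : ℕ :=
  sInf {t | ∃ P : Fin t → Set (Sym2 V), IsRegularPartition G P}

/-- `C` is a proper edge coloring of `G` with `n` colors: edges sharing a vertex get
distinct colors. -/
def IsProperEdgeColoring (G : SimpleGraph V) {n : ℕ} (C : Sym2 V → Fin n) : Prop :=
  ∀ e₁ ∈ G.edgeSet, ∀ e₂ ∈ G.edgeSet, e₁ ≠ e₂ → (∃ x, x ∈ e₁ ∧ x ∈ e₂) → C e₁ ≠ C e₂

/-- The edge chromatic number of `G`: the minimum number of colors of a proper edge coloring. -/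
noncomputable def edgeChromNum (G : SimpleGraph V) : ℕ :=
  sInf {n | ∃ C : Sym2 V → Fin n, IsProperEdgeColoring G C}

namespace Reg16
variable (n : ℕ)

abbrev NN : ℕ := 2 ^ (n + 1)

instance : NeZero (NN n) := ⟨by positivity⟩

abbrev Z := ZMod (NN n)

def lo : ℕ → ℕ
  | 0 => 2 ^ n - 1
  | (i + 1) => 2 ^ i

def hi : ℕ → ℕ
  | 0 => 2 ^ n
  | (i + 1) => 2 ^ (i + 1)

lemma lo_lt_hi (i : ℕ) : lo n i < hi n i := by
  cases i with
  | zero =>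
    simp only [lo, hi]
    exact Nat.sub_lt (by positivity) one_pos
  | succ j =>
    simp only [lo, hi]
    exact Nat.pow_lt_pow_succ one_lt_two

lemma hi_le (i : ℕ) (hi' : i < n) : hi n i ≤ 2 ^ n := by
  cases i with
  | zero => simp [hi]
  | succ j =>
    simp only [hi]
    exact Nat.pow_le_pow_right (by norm_num) (le_of_lt hi')

lemma hi_le' (i : ℕ) (h0 : i ≠ 0) (hi' : i < n) : hi n i ≤ 2 ^ n - 1 := by
  cases i with
  | zero => exact absurd rfl h0
  | succ j =>
    simp only [hi]
    have : 2 ^ (j + 1) < 2 ^ n := Nat.pow_lt_pow_right one_lt_two hi'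
    omega

lemma hi_lt_NN (i : ℕ) (hi' : i < n) : hi n i < NN n :=
  lt_of_le_of_lt (hi_le n i hi') (Nat.pow_lt_pow_succ one_lt_two)

def SD (i : ℕ) : Finset (Z n) :=
  ((Finset.Ioc (lo n i) (hi n i)).image (fun v : ℕ => (v : Z n))) ∪
    ((Finset.Ioc (lo n i) (hi n i)).image (fun v : ℕ => (-(v : Z n))))

lemma mem_SD_iff {i : ℕ} {δ : Z n} :
    δ ∈ SD n i ↔ ∃ v : ℕ, (lo n i < v ∧ v ≤ hi n i) ∧ (δ = (v : Z n) ∨ δ = -(v : Z n)) := by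
  simp only [SD, Finset.mem_union, Finset.mem_image, Finset.mem_Ioc]
  constructor
  · rintro (⟨v, hv, rfl⟩ | ⟨v, hv, rfl⟩)
    · exact ⟨v, hv, Or.inl rfl⟩
    · exact ⟨v, hv, Or.inr rfl⟩
  · rintro ⟨v, hv, (rfl | rfl)⟩
    · exact Or.inl ⟨v, hv, rfl⟩
    · exact Or.inr ⟨v, hv, rfl⟩

lemma neg_mem_SD {i : ℕ} {δ : Z n} (h : δ ∈ SD n i) : -δ ∈ SD n i := by
  rw [mem_SD_iff] at h ⊢
  obtain ⟨v, hv, (rfl | rfl)⟩ := h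
  · exact ⟨v, hv, Or.inr rfl⟩
  · exact ⟨v, hv, Or.inl (by simp)⟩

lemma zero_not_mem_SD {i : ℕ} (hi' : i < n) : (0 : Z n) ∉ SD n i := by
  rw [mem_SD_iff]
  rintro ⟨v, ⟨h1, h2⟩, hv⟩
  have hvN : v < NN n := lt_of_le_of_lt h2 (hi_lt_NN n i hi')
  have hv0 : 0 < v := lt_of_le_of_lt (Nat.zero_le _) h1
  have hval : ((v : Z n)).val = v := ZMod.val_cast_of_lt hvN
  have : (v : Z n) ≠ 0 := by
    intro h
    rw [h, ZMod.val_zero] at hval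
    omega
  rcases hv with h | h
  · exact this h.symm
  · exact this (by rw [← neg_neg ((v : Z n)), ← h, neg_zero])

lemma cast_inj_aux {v w : ℕ} (hv : v < NN n) (hw : w < NN n) (h : (v : Z n) = (w : Z n)) :
    v = w := by
  have := congrArg ZMod.val h
  rwa [ZMod.val_cast_of_lt hv, ZMod.val_cast_of_lt hw] at this

lemma cast_neg_aux {v w : ℕ} (hv1 : 1 ≤ v) (hv : v ≤ 2 ^ n) (hw1 : 1 ≤ w) (hw : w ≤ 2 ^ n)
    (h : (v : Z n) = -(w : Z n)) : v = 2 ^ n ∧ w = 2 ^ n := by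
  have hsum : ((v + w : ℕ) : Z n) = 0 := by
    push_cast
    rw [h]
    ring
  have hdvd : NN n ∣ v + w := (ZMod.natCast_eq_zero_iff _ _).mp hsum
  have hNN : NN n = 2 ^ n + 2 ^ n := by
    simp only [NN, pow_succ]
    ring
  have h1 : 0 < v + w := by omega
  have h2 : v + w ≤ NN n := by omega
  have : v + w = NN n := Nat.le_antisymm h2 (Nat.le_of_dvd h1 hdvd)
  omega

lemma SD_disjoint {i j : ℕ} (hij : i ≠ j) (hi' : i < n) (hj' : j < n) :
    Disjoint (SD n i) (SD n j) := by
  rw [Finset.disjoint_left]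
  intro δ hδi hδj
  rw [mem_SD_iff] at hδi hδj
  obtain ⟨v, ⟨hv1, hv2⟩, hv⟩ := hδi
  obtain ⟨w, ⟨hw1, hw2⟩, hw⟩ := hδj
  have hvN : v ≤ 2 ^ n := hv2.trans (hi_le n i hi')
  have hwN : w ≤ 2 ^ n := hw2.trans (hi_le n j hj')
  have hv0 : 1 ≤ v := by omega
  have hw0 : 1 ≤ w := by omega
  have hvNN : v < NN n := lt_of_le_of_lt hv2 (hi_lt_NN n i hi')
  have hwNN : w < NN n := lt_of_le_of_lt hw2 (hi_lt_NN n j hj')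
  -- in all cases derive either v = w (same sign) or v = w = 2^n (opposite)
  have key : v = w := by
    rcases hv with rfl | rfl <;> rcases hw with h | h
    · exact cast_inj_aux n hvNN hwNN h
    · exact (cast_neg_aux n hv0 hvN hw0 hwN h).1.trans (cast_neg_aux n hv0 hvN hw0 hwN h).2.symm
    · have h' : (w : Z n) = -(v : Z n) := h.symm
      exact ((cast_neg_aux n hw0 hwN hv0 hvN h').1.trans
        (cast_neg_aux n hw0 hwN hv0 hvN h').2.symm).symm
    · exact cast_inj_aux n hvNN hwNN (neg_injective h)
  -- now v = w lies in both Ioc intervals; show intervals are disjoint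
  subst key
  rcases Nat.eq_zero_or_pos i with rfl | hipos
  · rcases Nat.eq_zero_or_pos j with rfl | hjpos
    · exact hij rfl
    · have : hi n j ≤ 2 ^ n - 1 := hi_le' n j (by omega) hj'
      have : lo n 0 = 2 ^ n - 1 := rfl
      omega
  · rcases Nat.eq_zero_or_pos j with rfl | hjpos
    · have : hi n i ≤ 2 ^ n - 1 := hi_le' n i (by omega) hi'
      have : lo n 0 = 2 ^ n - 1 := rfl
      omega
    · -- both positive: i = a+1, j = b+1, a ≠ b
      obtain ⟨a, rfl⟩ := Nat.exists_eq_add_of_lt hipos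
      obtain ⟨b, rfl⟩ := Nat.exists_eq_add_of_lt hjpos
      simp only [lo, hi, Nat.zero_add] at hv1 hv2 hw1 hw2
      rcases Nat.lt_or_ge a b with hab | hab
      · have : 2 ^ (a + 1) ≤ 2 ^ b := Nat.pow_le_pow_right (by norm_num) hab
        omega
      · rcases Nat.lt_or_ge b a with hba | hba
        · have : 2 ^ (b + 1) ≤ 2 ^ a := Nat.pow_le_pow_right (by norm_num) hba
          omega
        · exact hij (by omega)

lemma card_SD {i : ℕ} (hi' : i < n) : (SD n i).card = 2 ^ i := by
  have hcast_inj : Set.InjOn (fun v : ℕ => (v : Z n)) (Finset.Ioc (lo n i) (hi n i)) := by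
    intro v hv w hw h
    simp only [Finset.coe_Ioc, Set.mem_Ioc] at hv hw
    exact cast_inj_aux n (lt_of_le_of_lt hv.2 (hi_lt_NN n i hi'))
      (lt_of_le_of_lt hw.2 (hi_lt_NN n i hi')) h
  have hneg_inj : Set.InjOn (fun v : ℕ => (-(v : Z n))) (Finset.Ioc (lo n i) (hi n i)) := by
    intro v hv w hw h
    simp only [Finset.coe_Ioc, Set.mem_Ioc] at hv hw
    exact cast_inj_aux n (lt_of_le_of_lt hv.2 (hi_lt_NN n i hi'))
      (lt_of_le_of_lt hw.2 (hi_lt_NN n i hi')) (neg_injective h)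
  cases i with
  | zero =>
    have hIoc : Finset.Ioc (lo n 0) (hi n 0) = {2 ^ n} := by
      have h1 : lo n 0 = 2 ^ n - 1 := rfl
      have h2 : hi n 0 = 2 ^ n := rfl
      rw [h1, h2]
      ext v
      simp only [Finset.mem_Ioc, Finset.mem_singleton]
      have : 0 < 2 ^ n := by positivity
      omega
    have hself : (-((2 ^ n : ℕ) : Z n)) = ((2 ^ n : ℕ) : Z n) := by
      have h0 : (((2 ^ n : ℕ) + (2 ^ n : ℕ) : ℕ) : Z n) = 0 := by
        rw [ZMod.natCast_eq_zero_iff]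
        exact dvd_of_eq (by rw [NN, pow_succ]; ring)
      rw [Nat.cast_add] at h0
      exact neg_eq_of_add_eq_zero_left h0
    rw [SD, hIoc, Finset.image_singleton, Finset.image_singleton, hself,
      Finset.union_idempotent, Finset.card_singleton, pow_zero]
  | succ k =>
    have hdisj : Disjoint ((Finset.Ioc (lo n (k+1)) (hi n (k+1))).image (fun v : ℕ => (v : Z n)))
        ((Finset.Ioc (lo n (k+1)) (hi n (k+1))).image (fun v : ℕ => (-(v : Z n)))) := by
      rw [Finset.disjoint_left]
      rintro δ hδ1 hδ2
      simp only [Finset.mem_image, Finset.mem_Ioc] at hδ1 hδ2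
      obtain ⟨v, hv, rfl⟩ := hδ1
      obtain ⟨w, hw, hweq⟩ := hδ2
      have hhi : hi n (k+1) ≤ 2 ^ n - 1 := hi_le' n (k+1) (by omega) hi'
      have hlo : 0 < lo n (k+1) := by simp only [lo]; positivity
      have := cast_neg_aux n (by omega) (by omega) (by omega) (by omega) hweq.symm
      omega
    rw [SD, Finset.card_union_of_disjoint hdisj,
      Finset.card_image_of_injOn hcast_inj, Finset.card_image_of_injOn hneg_inj,
      Nat.card_Ioc]
    simp only [lo, hi]
    have : 2 ^ k < 2 ^ (k+1) := Nat.pow_lt_pow_succ one_lt_two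
    rw [pow_succ]
    omega

abbrev W := Finset (Fin n) × Z n

def G : SimpleGraph (W n) where
  Adj p q := p.1 = q.1 ∧ ∃ i : Fin n, i ∈ p.1 ∧ (p.2 - q.2) ∈ SD n i.val
  symm := by
    constructor
    rintro p q ⟨h1, i, hi1, hi2⟩
    refine ⟨h1.symm, i, h1 ▸ hi1, ?_⟩
    have := neg_mem_SD n hi2
    rwa [neg_sub] at this
  loopless := by
    constructor
    rintro p ⟨h1, i, hi1, hi2⟩
    rw [sub_self] at hi2
    exact zero_not_mem_SD n i.isLt hi2

lemma adj_iff {p q : W n} :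
    (G n).Adj p q ↔ p.1 = q.1 ∧ ∃ i : Fin n, i ∈ p.1 ∧ (p.2 - q.2) ∈ SD n i.val := Iff.rfl

def Pt (i : ℕ) : Set (Sym2 (W n)) :=
  {e | e ∈ (G n).edgeSet ∧ ∀ u v : W n, e = s(u, v) → u.2 - v.2 ∈ SD n i}

lemma mem_Pt_iff {i : ℕ} {u v : W n} :
    s(u, v) ∈ Pt n i ↔ (G n).Adj u v ∧ u.2 - v.2 ∈ SD n i := by
  constructor
  · rintro ⟨he, hall⟩
    exact ⟨(SimpleGraph.mem_edgeSet _).mp he, hall u v rfl⟩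
  · rintro ⟨hadj, hδ⟩
    refine ⟨(SimpleGraph.mem_edgeSet _).mpr hadj, ?_⟩
    intro a b hab
    rw [Sym2.eq_iff] at hab
    rcases hab with ⟨rfl, rfl⟩ | ⟨rfl, rfl⟩
    · exact hδ
    · have := neg_mem_SD n hδ
      rwa [neg_sub] at this

lemma Pt_subset (i : ℕ) : Pt n i ⊆ (G n).edgeSet := fun _ h => h.1

lemma exists_class {e : Sym2 (W n)} (he : e ∈ (G n).edgeSet) : ∃ i : Fin n, e ∈ Pt n i.val := by
  induction e with
  | _ u v =>
    rw [SimpleGraph.mem_edgeSet, adj_iff] at he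
    obtain ⟨h1, i, hi1, hi2⟩ := he
    exact ⟨i, (mem_Pt_iff n).mpr ⟨⟨h1, i, hi1, hi2⟩, hi2⟩⟩

lemma Pt_disjoint {i j : ℕ} (hij : i ≠ j) (hi' : i < n) (hj' : j < n) :
    Disjoint (Pt n i) (Pt n j) := by
  rw [Set.disjoint_left]
  intro e hei hej
  induction e with
  | _ u v =>
    rw [mem_Pt_iff] at hei hej
    exact (Finset.disjoint_left.mp (SD_disjoint n hij hi' hj') hei.2) hej.2

/-- membership of an incident class -/
lemma class_mem {i : ℕ} (hi' : i < n) {x : W n} {e : Sym2 (W n)} (hei : e ∈ Pt n i)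
    (hxe : x ∈ e) : ∃ iF : Fin n, iF.val = i ∧ iF ∈ x.1 := by
  obtain ⟨b, rfl⟩ := Sym2.mem_iff_exists.mp hxe
  rw [mem_Pt_iff] at hei
  obtain ⟨⟨h1, j, hj1, hj2⟩, hδ⟩ := hei
  refine ⟨j, ?_, hj1⟩
  by_contra hne
  exact (Finset.disjoint_left.mp (SD_disjoint n hne j.isLt hi') hj2) hδ

lemma incident_set_eq {i : ℕ} {s : Finset (Fin n)} {z : Z n}
    (iF : Fin n) (hiv : iF.val = i) (his : iF ∈ s) :
    {e ∈ Pt n i | ((s, z) : W n) ∈ e} =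
      (fun δ : Z n => s(((s, z) : W n), ((s, z - δ) : W n))) '' ↑(SD n i) := by
  ext e
  simp only [Set.mem_setOf_eq, Set.mem_image, Finset.mem_coe]
  constructor
  · rintro ⟨hei, hxe⟩
    obtain ⟨b, rfl⟩ := Sym2.mem_iff_exists.mp hxe
    obtain ⟨hadj, hδ⟩ := (mem_Pt_iff n).mp hei
    have hb1 : b.1 = s := hadj.1.symm
    refine ⟨z - b.2, hδ, ?_⟩
    have hb : ((s, z - (z - b.2)) : W n) = b := by
      rw [sub_sub_cancel, ← hb1]
    rw [hb]
  · rintro ⟨δ, hδ, rfl⟩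
    have hδ' : ((s, z) : W n).2 - ((s, z - δ) : W n).2 ∈ SD n i := by
      simpa using hδ
    have hadj : (G n).Adj (s, z) (s, z - δ) :=
      ⟨rfl, ⟨iF, his, by rw [hiv]; exact hδ'⟩⟩
    exact ⟨(mem_Pt_iff n).mpr ⟨hadj, hδ'⟩, Sym2.mem_mk_left _ _⟩

lemma edgeDeg_Pt_mem {i : ℕ} (hi' : i < n) {s : Finset (Fin n)} {z : Z n}
    (iF : Fin n) (hiv : iF.val = i) (his : iF ∈ s) :
    edgeDeg (Pt n i) ((s, z) : W n) = 2 ^ i := by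
  have hinj : Function.Injective (fun δ : Z n => s(((s, z) : W n), ((s, z - δ) : W n))) := by
    intro a b h
    simp only [Sym2.congr_right, Prod.mk.injEq, true_and] at h
    exact sub_right_inj.mp h
  rw [edgeDeg, incident_set_eq n iF hiv his, Set.ncard_image_of_injective _ hinj,
    Set.ncard_coe_finset, card_SD n hi']

lemma edgeDeg_Pt_not_mem {i : ℕ} (hi' : i < n) {s : Finset (Fin n)} {z : Z n}
    (hns : (⟨i, hi'⟩ : Fin n) ∉ s) :
    edgeDeg (Pt n i) ((s, z) : W n) = 0 := by
  have hempty : {e ∈ Pt n i | ((s, z) : W n) ∈ e} = ∅ := by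
    rw [Set.eq_empty_iff_forall_notMem]
    rintro e ⟨hei, hxe⟩
    obtain ⟨jF, hjv, hjs⟩ := class_mem n hi' hei hxe
    exact hns (by rwa [show (⟨i, hi'⟩ : Fin n) = jF from (Fin.ext hjv.symm)])
  rw [edgeDeg, hempty, Set.ncard_empty]

lemma isReg_Pt {i : ℕ} (hi' : i < n) : IsRegularEdgeSet (Pt n i) (2 ^ i) := by
  rintro ⟨s, z⟩ ⟨e, he, hve⟩
  obtain ⟨iF, hiv, his⟩ := class_mem n hi' he hve
  exact edgeDeg_Pt_mem n hi' iF hiv his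

lemma Pt_nonempty {i : ℕ} (hi' : i < n) : (Pt n i).Nonempty := by
  refine ⟨s(((Finset.univ, ((hi n i : ℕ) : Z n)) : W n), ((Finset.univ, 0) : W n)), ?_⟩
  have hδ : ((hi n i : ℕ) : Z n) - 0 ∈ SD n i := by
    rw [sub_zero, mem_SD_iff]
    exact ⟨hi n i, ⟨lo_lt_hi n i, le_refl _⟩, Or.inl rfl⟩
  exact (mem_Pt_iff n).mpr ⟨⟨rfl, ⟨⟨i, hi'⟩, Finset.mem_univ _, hδ⟩⟩, hδ⟩

lemma Pt_iUnion : (⋃ iF : Fin n, Pt n iF.val) = (G n).edgeSet := by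
  ext e
  simp only [Set.mem_iUnion]
  exact ⟨fun ⟨i, hi⟩ => Pt_subset n i.val hi, exists_class n⟩

end Reg16

section General

lemma edgeDeg_iUnion [Fintype V] {t : ℕ} (A : Fin t → Set (Sym2 V))
    (hdisj : ∀ i j, i ≠ j → Disjoint (A i) (A j)) (v : V) :
    edgeDeg (⋃ i, A i) v = ∑ i, edgeDeg (A i) v := by
  classical
  have h1 : {e ∈ ⋃ i, A i | v ∈ e} = ⋃ i, {e ∈ A i | v ∈ e} := by
    ext e
    simp only [Set.mem_setOf_eq, Set.mem_iUnion]
    tauto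
  rw [edgeDeg, h1, Set.ncard_eq_toFinset_card', Set.toFinset_iUnion, Finset.card_biUnion]
  · exact Finset.sum_congr rfl fun i _ => by rw [edgeDeg, Set.ncard_eq_toFinset_card']
  · intro i _ j _ hij
    rw [Function.onFun, Finset.disjoint_left]
    intro e he1 he2
    rw [Set.mem_toFinset] at he1 he2
    exact Set.disjoint_left.mp (hdisj i j hij) he1.1 he2.1

lemma edgeDeg_edgeSet [Fintype V] (G : SimpleGraph V) [DecidableRel G.Adj]
    (v : V) : edgeDeg G.edgeSet v = G.degree v := by
  classical
  have h : {e ∈ G.edgeSet | v ∈ e} = G.incidenceSet v := rfl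
  rw [edgeDeg, h, Set.ncard_eq_toFinset_card', Set.toFinset_card,
    SimpleGraph.card_incidenceSet_eq_degree]

lemma degreeSet_ncard_le [Fintype V] (G : SimpleGraph V) [DecidableRel G.Adj]
    {t : ℕ} (P : Fin t → Set (Sym2 V)) (hP : IsRegularPartition G P) :
    {d : ℕ | ∃ x : V, G.degree x = d}.ncard ≤ 2 ^ t := by
  classical
  obtain ⟨hne, hdisj, hunion, hreg⟩ := hP
  choose r hr using hreg
  have hsub : {d : ℕ | ∃ x, G.degree x = d} ⊆
      (fun A : Finset (Fin t) => ∑ i ∈ A, r i) '' Set.univ := by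
    rintro d ⟨x, rfl⟩
    refine ⟨Finset.univ.filter (fun i => edgeDeg (P i) x ≠ 0), Set.mem_univ _, ?_⟩
    have hdeg : G.degree x = ∑ i, edgeDeg (P i) x := by
      rw [← edgeDeg_edgeSet, ← hunion, edgeDeg_iUnion P hdisj]
    rw [hdeg]
    simp only [Finset.sum_filter]
    refine Finset.sum_congr rfl fun i _ => ?_
    by_cases h : edgeDeg (P i) x ≠ 0
    · rw [if_pos h]
      obtain ⟨e, he⟩ := Set.nonempty_of_ncard_ne_zero h
      exact (hr i x ⟨e, he.1, he.2⟩).symm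
    · rw [if_neg h]
      push_neg at h
      exact h.symm
  have himg : ((fun A : Finset (Fin t) => ∑ i ∈ A, r i) '' Set.univ).ncard ≤ 2 ^ t := by
    refine le_trans (Set.ncard_image_le Set.finite_univ) ?_
    rw [Set.ncard_univ, Nat.card_eq_fintype_card, Fintype.card_finset, Fintype.card_fin]
  exact le_trans (Set.ncard_le_ncard hsub (Set.Finite.image _ Set.finite_univ)) himg

lemma sum_testBit {d m : ℕ} (h : d < 2 ^ m) :
    ∑ i ∈ Finset.range m, (if d.testBit i then 2 ^ i else 0) = d := by
  induction m generalizing d with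
  | zero =>
    interval_cases d
    simp
  | succ k ih =>
    have h2 : 2 ^ (k + 1) = 2 * 2 ^ k := by ring
    have hd2 : d / 2 < 2 ^ k := by omega
    rw [Finset.sum_range_succ']
    have hsum : ∑ i ∈ Finset.range k, (if d.testBit (i + 1) then 2 ^ (i + 1) else 0)
        = 2 * ∑ i ∈ Finset.range k, (if (d / 2).testBit i then 2 ^ i else 0) := by
      rw [Finset.mul_sum]
      refine Finset.sum_congr rfl fun i _ => ?_
      rw [Nat.testBit_add_one]
      split <;> ring
    rw [hsum, ih hd2]
    have h0 : (if d.testBit 0 then 2 ^ 0 else 0) = d % 2 := by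
      rcases Nat.mod_two_eq_zero_or_one d with h | h <;> simp [Nat.testBit_zero, h]
    rw [h0]
    omega

lemma geom2 (m : ℕ) : ∑ i ∈ Finset.range m, 2 ^ i = 2 ^ m - 1 := by
  induction m with
  | zero => simp
  | succ k ih =>
    rw [Finset.sum_range_succ, ih, pow_succ]
    have : 0 < 2 ^ k := by positivity
    omega

end General

namespace Reg16

noncomputable instance instDecG (n : ℕ) : DecidableRel (G n).Adj := Classical.decRel _

lemma degree_eq (n : ℕ) (s : Finset (Fin n)) (z : Z n) :
    (G n).degree ((s, z) : W n) = ∑ i ∈ s, 2 ^ (i : ℕ) := by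
  classical
  rw [← edgeDeg_edgeSet, ← Pt_iUnion n,
    edgeDeg_iUnion (fun iF : Fin n => Pt n iF.val)
      (fun i j hij => Pt_disjoint n (fun h => hij (Fin.ext h)) i.isLt j.isLt)]
  have hterm : ∀ iF : Fin n, edgeDeg (Pt n iF.val) ((s, z) : W n)
      = if iF ∈ s then 2 ^ (iF : ℕ) else 0 := by
    intro iF
    by_cases h : iF ∈ s
    · rw [edgeDeg_Pt_mem n iF.isLt iF rfl h, if_pos h]
    · rw [if_neg h]
      have h2 : (⟨iF.val, iF.isLt⟩ : Fin n) ∉ s := by simpa using h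
      exact edgeDeg_Pt_not_mem n iF.isLt h2
  rw [Finset.sum_congr rfl fun iF _ => hterm iF, Finset.sum_ite_mem, Finset.univ_inter]

lemma isRegPartition (n : ℕ) :
    IsRegularPartition (G n) (fun iF : Fin n => Pt n iF.val) :=
  ⟨fun i => Pt_nonempty n i.isLt,
   fun i j hij => Pt_disjoint n (fun h => hij (Fin.ext h)) i.isLt j.isLt,
   Pt_iUnion n,
   fun i => ⟨2 ^ i.val, isReg_Pt n i.isLt⟩⟩

end Reg16

/-- for every `n ≥ 1` there is a finite simple graph whose set of vertex
degrees is exactly `{0, 1, …, 2^n - 1}` (in particular `Δ(G) = 2^n - 1`) and whose regular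
number is `n`. -/
theorem exists_graph_degrees_Iic_and_regNum (n : ℕ) (hn : 1 ≤ n) :
    ∃ (W : Type) (_ : Fintype W) (G : SimpleGraph W) (_ : DecidableRel G.Adj),
      {d : ℕ | ∃ x : W, G.degree x = d} = Set.Iic (2 ^ n - 1) ∧
        G.maxDegree = 2 ^ n - 1 ∧ regNum G = n := by
  classical
  have hpow : 0 < 2 ^ n := by positivity
  have hdegle : ∀ v : Reg16.W n, (Reg16.G n).degree v ≤ 2 ^ n - 1 := by
    rintro ⟨s, z⟩
    rw [Reg16.degree_eq]
    calc ∑ i ∈ s, 2 ^ (i : ℕ) ≤ ∑ i : Fin n, 2 ^ (i : ℕ) :=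
          Finset.sum_le_sum_of_subset s.subset_univ
      _ = ∑ i ∈ Finset.range n, 2 ^ i := Fin.sum_univ_eq_sum_range (fun i => 2 ^ i) n
      _ = 2 ^ n - 1 := geom2 n
  have htop : (Reg16.G n).degree ((Finset.univ, 0) : Reg16.W n) = 2 ^ n - 1 := by
    rw [Reg16.degree_eq, Fin.sum_univ_eq_sum_range (fun i => 2 ^ i) n, geom2]
  have hset : {d : ℕ | ∃ x : Reg16.W n, (Reg16.G n).degree x = d} = Set.Iic (2 ^ n - 1) := by
    ext d
    simp only [Set.mem_setOf_eq, Set.mem_Iic]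
    constructor
    · rintro ⟨x, rfl⟩
      exact hdegle x
    · intro hd
      refine ⟨((Finset.univ.filter (fun i : Fin n => d.testBit i.val)), 0), ?_⟩
      rw [Reg16.degree_eq, Finset.sum_filter,
        Fin.sum_univ_eq_sum_range (fun i => if d.testBit i then 2 ^ i else 0) n]
      exact sum_testBit (by omega)
  refine ⟨Reg16.W n, inferInstance, Reg16.G n, inferInstance, hset, ?_, ?_⟩
  · apply le_antisymm
    · exact SimpleGraph.maxDegree_le_of_forall_degree_le _ _ hdegle
    · rw [← htop]
      exact SimpleGraph.degree_le_maxDegree _ _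
  · apply le_antisymm
    · exact Nat.sInf_le ⟨fun iF : Fin n => Reg16.Pt n iF.val, Reg16.isRegPartition n⟩
    · refine le_csInf ⟨n, fun iF : Fin n => Reg16.Pt n iF.val, Reg16.isRegPartition n⟩ ?_
      rintro t ⟨P, hP⟩
      have hcard := degreeSet_ncard_le (Reg16.G n) P hP
      rw [hset] at hcard
      have hIic : (Set.Iic (2 ^ n - 1)).ncard = 2 ^ n := by
        rw [← Finset.coe_Iic, Set.ncard_coe_finset, Nat.card_Iic]
        omega
      rw [hIic] at hcard
      exact (Nat.pow_le_pow_iff_right one_lt_two).mp hcard
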